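/- arXiv:2205.03200 — 2 statements merged into one kernel-verified Lean document; each statement's English description precedes it below -/
import Mathlib

section
/- Let M be an n × (n+2) integer matrix such that for every integer q ≥ 2, the only vector p ∈ (ZMod q)^(n+2) with (M mod q)·p = 0 and with the last two coordinates zero is p = 0. Then for every c ∈ Z^n there exists a unique p ∈ Z^(n+2) with last two coordinates zero such that M·p = −c. -/
/-- extend a vector on `Fin n` by zeros to `Fin (n+2)` -/
private def ext4 {R : Type*} [Zero R] {n : ℕ} (v : Fin n → R) : Fin (n + 2) → R :=
  fun i => if h : (i : ℕ) < n then v ⟨i, h⟩ else 0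

private lemma mulVec_ext4 {R : Type*} [CommRing R] {n : ℕ}
    (N : Matrix (Fin n) (Fin (n + 2)) R) (v : Fin n → R) :
    N.mulVec (ext4 v) =
      (Matrix.of fun i j : Fin n => N i (Fin.castLE (by omega) j)).mulVec v := by
  funext r
  simp only [Matrix.mulVec, dotProduct]
  rw [Fin.sum_univ_castSucc, Fin.sum_univ_castSucc]
  have h1 : ext4 v (Fin.last (n + 1)) = 0 := by
    simp [ext4, Fin.last]
  have h2 : ext4 v ((Fin.last n).castSucc) = 0 := by
    simp [ext4, Fin.last]
  rw [h1, h2]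
  simp only [mul_zero, add_zero]
  refine Finset.sum_congr rfl fun j _ => ?_
  have hj : ((j.castSucc.castSucc : Fin (n + 2)) : ℕ) < n := by simp
  have : ext4 v (j.castSucc.castSucc) = v j := by
    simp [ext4, hj]
  rw [this]
  congr 1

theorem stmt_4 (n : ℕ) (M : Matrix (Fin n) (Fin (n + 2)) ℤ)
    (h : ∀ q : ℕ, 2 ≤ q → ∀ p : Fin (n + 2) → ZMod q,
        (M.map (Int.cast : ℤ → ZMod q)).mulVec p = 0 →
        p ⟨n, by omega⟩ = 0 → p ⟨n + 1, by omega⟩ = 0 → p = 0) :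
    ∀ c : Fin n → ℤ,
      ∃! p : Fin (n + 2) → ℤ,
        p ⟨n, by omega⟩ = 0 ∧ p ⟨n + 1, by omega⟩ = 0 ∧ M.mulVec p = -c := by
  -- the square matrix of the first n columns
  set A : Matrix (Fin n) (Fin n) ℤ :=
    Matrix.of fun i j : Fin n => M i (Fin.castLE (by omega) j) with hA
  -- A has unit determinant
  have hU : IsUnit A.det := by
    rw [Int.isUnit_iff]
    by_contra hd
    obtain ⟨p, hp, hpd⟩ : ∃ p : ℕ, p.Prime ∧ (p : ℤ) ∣ A.det := by
      rcases eq_or_ne A.det 0 with h0 | h0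
      · exact ⟨2, Nat.prime_two, h0 ▸ dvd_zero 2⟩
      · obtain ⟨p, hp, hpd⟩ := Int.exists_prime_and_dvd (show (A.det).natAbs ≠ 1 by omega)
        exact ⟨p.natAbs, Int.prime_iff_natAbs_prime.mp hp,
          (Int.natAbs_dvd).mpr hpd⟩
    haveI : Fact p.Prime := ⟨hp⟩
    -- over ZMod p, det of A.map cast is 0
    have hdet0 : (A.map (Int.cast : ℤ → ZMod p)).det = 0 := by
      rw [show A.map (Int.cast : ℤ → ZMod p) = (Int.castRingHom (ZMod p)).mapMatrix A from rfl,
        ← RingHom.map_det]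
      exact_mod_cast (ZMod.intCast_zmod_eq_zero_iff_dvd _ _).mpr hpd
    obtain ⟨v, hv, hAv⟩ := (Matrix.exists_mulVec_eq_zero_iff).mpr hdet0
    have key := h p hp.two_le (ext4 v) ?_ ?_ ?_
    · apply hv
      funext j
      have := congrFun key (Fin.castLE (by omega) j)
      simpa [ext4, j.isLt] using this
    · rw [mulVec_ext4]
      exact hAv
    · simp [ext4]
    · simp [ext4]
  -- now solve over ℤ
  intro c
  haveI := A.invertibleOfIsUnitDet hU
  refine ⟨ext4 (A⁻¹.mulVec (-c)), ⟨by simp [ext4], by simp [ext4], ?_⟩, ?_⟩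
  · rw [mulVec_ext4, ← hA, Matrix.mulVec_mulVec, Matrix.mul_nonsing_inv _ hU,
      Matrix.one_mulVec]
  · rintro q ⟨hq1, hq2, hq3⟩
    -- q equals ext4 of its restriction
    set w : Fin n → ℤ := fun j => q (Fin.castLE (by omega) j) with hw
    have hqe : q = ext4 w := by
      funext i
      by_cases hi : (i : ℕ) < n
      · simp only [ext4, dif_pos hi, hw]
        congr 1
      · simp only [ext4, dif_neg hi]
        have : (i : ℕ) = n ∨ (i : ℕ) = n + 1 := by omega
        rcases this with h' | h'
        · have : i = ⟨n, by omega⟩ := Fin.ext h'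
          rw [this]; exact hq1
        · have : i = ⟨n + 1, by omega⟩ := Fin.ext h'
          rw [this]; exact hq2
    have hAw : A.mulVec w = -c := by
      rw [hA, ← mulVec_ext4, ← hqe]; exact hq3
    have hwe : w = A⁻¹.mulVec (-c) := by
      have := congrArg (A⁻¹.mulVec ·) hAw
      simpa [Matrix.mulVec_mulVec, Matrix.nonsing_inv_mul _ hU, Matrix.one_mulVec] using this
    rw [hqe, hwe]
end

section
/- Let k ≥ 2 and let M be an n × (n+2) matrix over ZMod k such that the only p ∈ (ZMod k)^(n+2) with M·p = 0 and last two coordinates zero is p = 0. Then the kernel of M (as a linear map (ZMod k)^(n+2) → (ZMod k)^n) has cardinality exactly k². -/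
theorem stmt_7 (k n : ℕ) (hk : 2 ≤ k)
    (M : Matrix (Fin n) (Fin (n + 2)) (ZMod k))
    (h : ∀ p : Fin (n + 2) → ZMod k, M.mulVec p = 0 →
        p ⟨n, by omega⟩ = 0 → p ⟨n + 1, by omega⟩ = 0 → p = 0) :
    Nat.card {p : Fin (n + 2) → ZMod k | M.mulVec p = 0} = k ^ 2 := by
  haveI : NeZero k := ⟨by omega⟩
  set L := Matrix.mulVecLin M with hLdef
  have hset : {p : Fin (n + 2) → ZMod k | M.mulVec p = 0} = (LinearMap.ker L : Set _) := by
    ext p; simp [LinearMap.mem_ker, hLdef]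
  rw [hset]
  -- upper bound via injection into (ZMod k) × (ZMod k)
  have hinj : Function.Injective (fun p : LinearMap.ker L =>
      ((p : Fin (n + 2) → ZMod k) ⟨n, by omega⟩,
       (p : Fin (n + 2) → ZMod k) ⟨n + 1, by omega⟩)) := by
    intro p q hpq
    simp only [Prod.mk.injEq] at hpq
    have hmem : M.mulVec ((p : Fin (n + 2) → ZMod k) - q) = 0 := by
      have : L ((p : Fin (n + 2) → ZMod k) - q) = 0 := by
        rw [map_sub, p.2, q.2, sub_zero]
      simpa [hLdef, Matrix.mulVecLin_apply] using this
    have hz := h _ hmem (by simp [hpq.1]) (by simp [hpq.2])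
    exact Subtype.ext (sub_eq_zero.mp hz)
  have hub : Nat.card (LinearMap.ker L) ≤ k ^ 2 := by
    calc Nat.card (LinearMap.ker L) ≤ Nat.card (ZMod k × ZMod k) :=
          Nat.card_le_card_of_injective _ hinj
      _ = k ^ 2 := by simp [Nat.card_eq_fintype_card, ZMod.card, sq]
  -- lower bound via first isomorphism theorem
  have hdom : Nat.card (Fin (n + 2) → ZMod k) = k ^ (n + 2) := by
    simp [Nat.card_eq_fintype_card, ZMod.card]
  have hquot := Submodule.card_eq_card_quotient_mul_card (LinearMap.ker L)
  have hrange : Nat.card ((Fin (n + 2) → ZMod k) ⧸ LinearMap.ker L) =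
      Nat.card (LinearMap.range L) := Nat.card_congr (L.quotKerEquivRange).toEquiv
  have hrle : Nat.card (LinearMap.range L) ≤ k ^ n := by
    calc Nat.card (LinearMap.range L) ≤ Nat.card (Fin n → ZMod k) :=
          Nat.card_le_card_of_injective _ Subtype.val_injective
      _ = k ^ n := by simp [Nat.card_eq_fintype_card, ZMod.card]
  have key : k ^ 2 * k ^ n = Nat.card (LinearMap.ker L) *
      Nat.card ((Fin (n + 2) → ZMod k) ⧸ LinearMap.ker L) := by
    rw [← hquot, hdom, ← pow_add]; ring_nf
  have hlb : k ^ 2 ≤ Nat.card (LinearMap.ker L) := by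
    by_contra hlt
    push_neg at hlt
    have : k ^ 2 * k ^ n < k ^ 2 * k ^ n := by
      calc k ^ 2 * k ^ n = Nat.card (LinearMap.ker L) *
            Nat.card ((Fin (n + 2) → ZMod k) ⧸ LinearMap.ker L) := key
        _ ≤ Nat.card (LinearMap.ker L) * k ^ n := by
            exact Nat.mul_le_mul_left _ (hrange ▸ hrle)
        _ < k ^ 2 * k ^ n := by
            have hpos : 0 < k ^ n := by positivity
            exact Nat.mul_lt_mul_of_lt_of_le hlt (le_refl _) hpos
    exact lt_irrefl _ this
  exact le_antisymm hub hlb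
end
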